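/- For every d ≥ 2 and every positive integer V, the number of minimal d-dimensional V-boxes satisfies f_d(V) ≥ d·(⌊V^{1/d}⌋)^{d-1} − d + 1. -/
import Mathlib


/-- A `d`-dimensional box with side lengths `x` is a minimal `V`-box. -/
def IsMinBox (d V : ℕ) (x : Fin d → ℕ) : Prop :=
  (∀ i, 1 ≤ x i) ∧ V ≤ ∏ i, x i ∧
  ∀ y : Fin d → ℕ, (∀ i, 1 ≤ y i) → (∀ i, y i ≤ x i) → y ≠ x → ∏ i, y i < V

/-- `f_d(V)`, the number of minimal `d`-dimensional `V`-boxes. -/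
noncomputable def numMinBoxes (d V : ℕ) : ℕ :=
  Nat.card {x : Fin d → ℕ // IsMinBox d V x}

namespace Stmt8Aux

/-- ceiling division -/
def cdiv (V P : ℕ) : ℕ := (V + P - 1) / P

lemma cdiv_le {V P : ℕ} (hP : 1 ≤ P) (hV : 1 ≤ V) :
    V ≤ cdiv V P * P ∧ cdiv V P * P < V + P := by
  have h1 := Nat.div_add_mod (V + P - 1) P
  have h2 : (V + P - 1) % P < P := Nat.mod_lt _ hP
  unfold cdiv
  rw [mul_comm]
  generalize P * ((V + P - 1) / P) = s at h1 ⊢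
  omega

/-- The box with pivot `j` and free coordinates `a`. -/
def box (V : ℕ) {e : ℕ} (j : Fin (e + 1)) (a : Fin e → ℕ) : Fin (e + 1) → ℕ :=
  j.insertNth (cdiv V (∏ k, a k)) a

lemma box_same (V : ℕ) {e : ℕ} (j : Fin (e + 1)) (a : Fin e → ℕ) :
    box V j a j = cdiv V (∏ k, a k) := by
  simp [box]

lemma box_other (V : ℕ) {e : ℕ} (j : Fin (e + 1)) (a : Fin e → ℕ) (k : Fin e) :
    box V j a (j.succAbove k) = a k := by
  simp [box]

lemma prod_box (V : ℕ) {e : ℕ} (j : Fin (e + 1)) (a : Fin e → ℕ) :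
    ∏ i, box V j a i = cdiv V (∏ k, a k) * ∏ k, a k := by
  rw [Fin.prod_univ_succAbove _ j, box_same]
  congr 1
  exact Finset.prod_congr rfl fun k _ => box_other V j a k

section

variable {e m V : ℕ} {a : Fin e → ℕ}

lemma hV1 (hm : 1 ≤ m) (hVm : m ^ (e + 1) ≤ V) : 1 ≤ V :=
  le_trans (Nat.one_le_pow _ _ hm) hVm

lemma prodP_pos (ha1 : ∀ k, 1 ≤ a k) : 1 ≤ ∏ k, a k :=
  Finset.one_le_prod' fun k _ => ha1 k

lemma prodP_le (ham : ∀ k, a k ≤ m) : ∏ k, a k ≤ m ^ e := by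
  calc ∏ k, a k ≤ ∏ _k : Fin e, m := Finset.prod_le_prod (fun _ _ => Nat.zero_le _)
        (fun k _ => ham k)
    _ = m ^ e := by simp

lemma cdiv_ge (hm : 1 ≤ m) (hVm : m ^ (e + 1) ≤ V) (ha1 : ∀ k, 1 ≤ a k)
    (ham : ∀ k, a k ≤ m) : m ≤ cdiv V (∏ k, a k) := by
  have hP1 : 1 ≤ ∏ k, a k := prodP_pos ha1
  have h := (cdiv_le hP1 (hV1 hm hVm)).1
  have : m * ∏ k, a k ≤ cdiv V (∏ k, a k) * ∏ k, a k := by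
    calc m * ∏ k, a k ≤ m * m ^ e := Nat.mul_le_mul_left _ (prodP_le ham)
      _ = m ^ (e + 1) := by ring
      _ ≤ V := hVm
      _ ≤ _ := h
  exact Nat.le_of_mul_le_mul_right this hP1

/-- All the constructed boxes are minimal `V`-boxes. -/
lemma isMinBox_box (hm : 1 ≤ m) (hVm : m ^ (e + 1) ≤ V) (ha1 : ∀ k, 1 ≤ a k)
    (ham : ∀ k, a k ≤ m) (j : Fin (e + 1)) : IsMinBox (e + 1) V (box V j a) := by
  set P := ∏ k, a k with hP
  have hP1 : 1 ≤ P := prodP_pos ha1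
  obtain ⟨hle, hlt⟩ := cdiv_le hP1 (hV1 hm hVm)
  have hcm : m ≤ cdiv V P := cdiv_ge hm hVm ha1 ham
  have hbox1 : ∀ i, 1 ≤ box V j a i := by
    intro i
    rcases eq_or_ne i j with rfl | h
    · rw [box_same]; exact le_trans hm hcm
    · obtain ⟨k, rfl⟩ := Fin.exists_succAbove_eq h
      rw [box_other]; exact ha1 k
  refine ⟨hbox1, ?_, ?_⟩
  · rw [prod_box]; exact hle
  · intro y hy1 hyle hyne
    have hex : ∃ i, y i < box V j a i := by
      by_contra h
      push_neg at h
      exact hyne (funext fun i => le_antisymm (hyle i) (h i))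
    obtain ⟨i, hi⟩ := hex
    have key : ∏ k, y k ≤ (box V j a i - 1) * ∏ k ∈ Finset.univ.erase i, box V j a k := by
      rw [← Finset.mul_prod_erase Finset.univ y (Finset.mem_univ i)]
      refine Nat.mul_le_mul (by omega) ?_
      exact Finset.prod_le_prod (fun _ _ => Nat.zero_le _) fun k _ => hyle k
    have hprod_erase : box V j a i * ∏ k ∈ Finset.univ.erase i, box V j a k
        = cdiv V P * P := by
      rw [Finset.mul_prod_erase Finset.univ _ (Finset.mem_univ i), prod_box]
    have hlast : (box V j a i - 1) * ∏ k ∈ Finset.univ.erase i, box V j a k < V := by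
      rcases eq_or_ne i j with rfl | h
      · -- pivot coordinate: box i = cdiv V P
        rw [box_same] at hprod_erase ⊢
        rw [← hP] at hprod_erase ⊢
        have hcpos : 1 ≤ cdiv V P := le_trans hm hcm
        have hE : ∏ k ∈ Finset.univ.erase i, box V i a k = P :=
          Nat.eq_of_mul_eq_mul_left (by omega) hprod_erase
        rw [hE]
        have : (cdiv V P - 1) * P + P = cdiv V P * P := by
          have h1 : cdiv V P - 1 + 1 = cdiv V P := Nat.sub_add_cancel hcpos
          calc (cdiv V P - 1) * P + P = (cdiv V P - 1 + 1) * P := by ring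
            _ = cdiv V P * P := by rw [h1]
        omega
      · obtain ⟨k0, rfl⟩ := Fin.exists_succAbove_eq h
        rw [box_other] at hprod_erase ⊢
        set Q : ℕ := ∏ k ∈ Finset.univ.erase k0, a k with hQdef
        have hQ : a k0 * Q = P := Finset.mul_prod_erase Finset.univ a (Finset.mem_univ k0)
        have hEeq : a k0 * ∏ k ∈ Finset.univ.erase (j.succAbove k0), box V j a k
            = a k0 * (cdiv V P * Q) := by
          rw [hprod_erase]
          calc cdiv V P * P = cdiv V P * (a k0 * Q) := by rw [hQ]
            _ = a k0 * (cdiv V P * Q) := by ring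
        have hE : ∏ k ∈ Finset.univ.erase (j.succAbove k0), box V j a k = cdiv V P * Q :=
          Nat.eq_of_mul_eq_mul_left (by have := ha1 k0; omega) hEeq
        rw [hE]
        -- (a k0 - 1) * (cdiv * Q) + cdiv * Q = cdiv * P < V + P = V + a k0 * Q ≤ V + cdiv * Q
        have e1 : (a k0 - 1) * (cdiv V P * Q) + cdiv V P * Q = cdiv V P * P := by
          have h1 : a k0 - 1 + 1 = a k0 := Nat.sub_add_cancel (ha1 k0)
          calc (a k0 - 1) * (cdiv V P * Q) + cdiv V P * Q
              = (a k0 - 1 + 1) * (cdiv V P * Q) := by ring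
            _ = a k0 * (cdiv V P * Q) := by rw [h1]
            _ = cdiv V P * (a k0 * Q) := by ring
            _ = cdiv V P * P := by rw [hQ]
        have e2 : cdiv V P * P < V + cdiv V P * Q := by
          have h2 : P ≤ cdiv V P * Q := by
            calc P = a k0 * Q := hQ.symm
              _ ≤ cdiv V P * Q := Nat.mul_le_mul_right _ (le_trans (ham k0) hcm)
          omega
        omega
    exact lt_of_le_of_lt key hlast

/-- A collision between boxes with different pivots forces all the free
coordinates of the second one to be equal to `m`. -/
lemma collision (hm : 1 ≤ m) (hVm : m ^ (e + 1) ≤ V)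
    {j j' : Fin (e + 1)} (hne : j' ≠ j) {a' : Fin e → ℕ}
    (ham : ∀ k, a k ≤ m) (ha1' : ∀ k, 1 ≤ a' k) (ham' : ∀ k, a' k ≤ m)
    (heq : box V j a = box V j' a') : ∀ k, a' k = m := by
  obtain ⟨k0, hk0⟩ := Fin.exists_succAbove_eq hne
  set P' := ∏ k, a' k with hP'
  have hP1' : 1 ≤ P' := prodP_pos ha1'
  have h1 : a k0 = cdiv V P' := by
    have := congrFun heq (j.succAbove k0)
    rw [box_other] at this
    rw [this, hk0, box_same]
  have h2 : cdiv V P' ≤ m := h1 ▸ ham k0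
  have h3 : m ≤ cdiv V P' := cdiv_ge hm hVm ha1' ham'
  have h4 : cdiv V P' = m := le_antisymm h2 h3
  have h5 : V ≤ m * P' := by
    have := (cdiv_le hP1' (hV1 hm hVm)).1
    rw [h4] at this; exact this
  have h6 : m * P' ≤ m * m ^ e := Nat.mul_le_mul_left _ (prodP_le ham')
  have h7 : m * P' = m * m ^ e := le_antisymm h6 (by
    rw [show m * m ^ e = m ^ (e + 1) from by ring]
    exact le_trans hVm h5)
  have h8 : P' = m ^ e := Nat.eq_of_mul_eq_mul_left (by omega) h7
  intro k
  by_contra hk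
  have hlt : a' k < m := lt_of_le_of_ne (ham' k) hk
  have : P' < m ^ e := by
    calc P' = ∏ k, a' k := hP'
      _ < ∏ _k : Fin e, m := Finset.prod_lt_prod (fun i _ => ha1' i)
          (fun i _ => ham' i) ⟨k, Finset.mem_univ k, hlt⟩
      _ = m ^ e := by simp
  omega

end

/-- Each coordinate of a minimal box is at most `V`. -/
lemma coord_le {d V : ℕ} (hV : 1 ≤ V) {x : Fin d → ℕ} (hx : IsMinBox d V x)
    (i : Fin d) : x i ≤ V := by
  obtain ⟨h1, h2, h3⟩ := hx
  rcases Nat.lt_or_ge (x i) 2 with h | h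
  · omega
  · set y := Function.update x i (x i - 1) with hy
    have hy1 : ∀ k, 1 ≤ y k := by
      intro k
      rcases eq_or_ne k i with rfl | hk
      · simp [hy]; omega
      · simp [hy, Function.update_of_ne hk]; exact h1 k
    have hyle : ∀ k, y k ≤ x k := by
      intro k
      rcases eq_or_ne k i with rfl | hk
      · simp [hy]
      · simp [hy, Function.update_of_ne hk]
    have hyne : y ≠ x := by
      intro hcon
      have := congrFun hcon i
      simp [hy] at this
      omega
    have hlt := h3 y hy1 hyle hyne
    have : y i ≤ ∏ k, y k :=
      Finset.single_le_prod' (fun k _ => hy1 k) (Finset.mem_univ i)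
    have hyi : y i = x i - 1 := by simp [hy]
    omega

lemma finite_minBoxes (d V : ℕ) (hV : 1 ≤ V) :
    Finite {x : Fin d → ℕ // IsMinBox d V x} := by
  have : Function.Injective
      (fun p : {x : Fin d → ℕ // IsMinBox d V x} => fun i => (⟨p.1 i,
        Nat.lt_succ_of_le (coord_le hV p.2 i)⟩ : Fin (V + 1))) := by
    intro p q h
    ext i
    exact congrArg Fin.val (congrFun h i)
  exact Finite.of_injective _ this


section Count

variable {e m' V : ℕ}

/-- Lift a bounded tuple to a tuple of naturals in `[1, m'+1]`. -/
def lift' (f : Fin e → Fin (m' + 1)) : Fin e → ℕ := fun k => (f k).1 + 1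

lemma lift'_one (f : Fin e → Fin (m' + 1)) (k : Fin e) : 1 ≤ lift' f k :=
  Nat.succ_le_succ (Nat.zero_le _)

lemma lift'_le (f : Fin e → Fin (m' + 1)) (k : Fin e) : lift' f k ≤ m' + 1 :=
  (f k).2

lemma lift'_inj {f g : Fin e → Fin (m' + 1)} (h : lift' f = lift' g) : f = g := by
  funext k
  have := congrFun h k
  simp only [lift', Nat.add_right_cancel_iff] at this
  exact Fin.ext this

lemma lift'_const {f : Fin e → Fin (m' + 1)} (h : ∀ k, lift' f k = m' + 1) :
    f = fun _ => Fin.last m' := by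
  funext k
  have := h k
  simp only [lift'] at this
  exact Fin.ext (by simpa [Fin.last] using Nat.add_right_cancel this)

/-- The index type of the injection. -/
def T (e m' : ℕ) : Type :=
  (Fin e → Fin (m' + 1)) ⊕
    (Fin e × {f : Fin e → Fin (m' + 1) // f ≠ fun _ => Fin.last m'})

/-- The injection itself. -/
def FF (e m' V : ℕ) : T e m' → (Fin (e + 1) → ℕ)
  | .inl f => box V 0 (lift' f)
  | .inr p => box V p.1.succ (lift' p.2.1)

lemma FF_min (hVm : (m' + 1) ^ (e + 1) ≤ V) (t : T e m') :
    IsMinBox (e + 1) V (FF e m' V t) := by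
  cases t with
  | inl f => exact isMinBox_box (Nat.le_add_left 1 m') hVm (lift'_one f) (lift'_le f) 0
  | inr p =>
      exact isMinBox_box (Nat.le_add_left 1 m') hVm (lift'_one p.2.1) (lift'_le p.2.1) p.1.succ

lemma box_inj_same {j : Fin (e + 1)} {a a' : Fin e → ℕ}
    (h : box V j a = box V j a') : a = a' := by
  funext k
  have := congrFun h (j.succAbove k)
  rwa [box_other, box_other] at this

lemma FF_inj (hVm : (m' + 1) ^ (e + 1) ≤ V) : Function.Injective (FF e m' V) := by
  have hm : 1 ≤ m' + 1 := Nat.le_add_left 1 m'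
  intro t t' h
  cases t with
  | inl f =>
    cases t' with
    | inl g =>
      exact congrArg Sum.inl (lift'_inj (box_inj_same h))
    | inr p =>
      exfalso
      have hall : ∀ k, lift' p.2.1 k = m' + 1 :=
        collision hm hVm (Fin.succ_ne_zero p.1) (lift'_le f) (lift'_one p.2.1)
          (lift'_le p.2.1) h
      exact p.2.2 (lift'_const hall)
  | inr p =>
    cases t' with
    | inl g =>
      exfalso
      have hall : ∀ k, lift' p.2.1 k = m' + 1 :=
        collision hm hVm (Fin.succ_ne_zero p.1) (lift'_le g) (lift'_one p.2.1)
          (lift'_le p.2.1) h.symm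
      exact p.2.2 (lift'_const hall)
    | inr q =>
      rcases eq_or_ne p.1 q.1 with hk | hk
      · have hq : box V p.1.succ (lift' p.2.1) = box V q.1.succ (lift' q.2.1) := h
        rw [← hk] at hq
        have := lift'_inj (box_inj_same hq)
        have h2 : p.2 = q.2 := Subtype.ext this
        have : p = q := Prod.ext hk h2
        rw [this]
      · exfalso
        have hne : q.1.succ ≠ p.1.succ := fun hcon => hk (Fin.succ_injective _ hcon).symm
        have hall : ∀ k, lift' q.2.1 k = m' + 1 :=
          collision hm hVm hne (lift'_le p.2.1) (lift'_one q.2.1) (lift'_le q.2.1) h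
        exact q.2.2 (lift'_const hall)

instance : Fintype (T e m') := by unfold T; infer_instance

lemma card_T (e m' : ℕ) :
    Nat.card (T e m') = (m' + 1) ^ e + e * ((m' + 1) ^ e - 1) := by
  have h1 : Fintype.card {f : Fin e → Fin (m' + 1) // f ≠ fun _ => Fin.last m'}
      = (m' + 1) ^ e - 1 := by
    rw [Fintype.card_subtype_compl, Fintype.card_subtype_eq]
    simp
  rw [Nat.card_eq_fintype_card]
  unfold T
  rw [Fintype.card_sum, Fintype.card_prod, h1]
  simp [mul_comm]

end Count

end Stmt8Aux

theorem stmt8 (d V : ℕ) (hd : 2 ≤ d) (hV : 1 ≤ V) :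
    (d : ℤ) * (⌊(V : ℝ) ^ ((1 : ℝ) / d)⌋₊ : ℤ) ^ (d - 1) - d + 1
      ≤ (numMinBoxes d V : ℤ) := by
  obtain ⟨e, rfl⟩ : ∃ e, d = e + 1 := ⟨d - 1, by omega⟩
  set M := ⌊(V : ℝ) ^ ((1 : ℝ) / ((e + 1 : ℕ) : ℝ))⌋₊ with hM
  have hdR : (0 : ℝ) < ((e + 1 : ℕ) : ℝ) := by positivity
  have hm1 : 1 ≤ M := by
    apply Nat.le_floor
    have : (1 : ℝ) ≤ (V : ℝ) ^ ((1 : ℝ) / ((e + 1 : ℕ) : ℝ)) :=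
      Real.one_le_rpow (by exact_mod_cast hV) (by positivity)
    exact_mod_cast this
  have hmd : M ^ (e + 1) ≤ V := by
    have hfl : (M : ℝ) ≤ (V : ℝ) ^ ((1 : ℝ) / ((e + 1 : ℕ) : ℝ)) :=
      Nat.floor_le (Real.rpow_nonneg (by positivity) _)
    have hpow : ((M : ℝ)) ^ (e + 1) ≤ ((V : ℝ) ^ ((1 : ℝ) / ((e + 1 : ℕ) : ℝ))) ^ (e + 1) :=
      pow_le_pow_left₀ (Nat.cast_nonneg M) hfl _
    have hr : ((V : ℝ) ^ ((1 : ℝ) / ((e + 1 : ℕ) : ℝ))) ^ (e + 1) = (V : ℝ) := by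
      rw [← Real.rpow_natCast ((V : ℝ) ^ ((1 : ℝ) / ((e + 1 : ℕ) : ℝ))) (e + 1),
        ← Real.rpow_mul (by positivity), one_div,
        inv_mul_cancel₀ (ne_of_gt hdR), Real.rpow_one]
    rw [hr] at hpow
    exact_mod_cast hpow
  obtain ⟨m', hm'⟩ : ∃ m', M = m' + 1 := ⟨M - 1, by omega⟩
  rw [hm'] at hmd
  haveI := Stmt8Aux.finite_minBoxes (e + 1) V hV
  have hcard : Nat.card (Stmt8Aux.T e m') ≤ numMinBoxes (e + 1) V := by
    exact Nat.card_le_card_of_injective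
      (fun t => (⟨Stmt8Aux.FF e m' V t, Stmt8Aux.FF_min hmd t⟩ :
        {x : Fin (e + 1) → ℕ // IsMinBox (e + 1) V x}))
      (fun t t' h => Stmt8Aux.FF_inj hmd (congrArg Subtype.val h))
  rw [Stmt8Aux.card_T] at hcard
  have h1 : 1 ≤ (m' + 1) ^ e := Nat.one_le_pow _ _ (Nat.succ_pos m')
  zify [h1] at hcard
  rw [hm']
  have hee : e + 1 - 1 = e := by omega
  rw [hee]
  push_cast
  nlinarith [hcard]
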